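/- Let ρ_AB be a density operator on ℂ^{d_A} ⊗ ℂ^{d_B}, and let X be a traceless Hermitian operator on ℂ^{d_A} with Tr(X²)=d_A, and Y a traceless Hermitian operator on ℂ^{d_B} with Tr(Y²)=d_B. Then |Tr(ρ_AB (X⊗Y))| ≥ √(d_B−1)·|Tr(ρ_AB (X⊗𝟙))| + √(d_A−1)·|Tr(ρ_AB (𝟙⊗Y))| − √(d_A−1)√(d_B−1). -/

import Mathlib

set_option linter.unusedSectionVars false
set_option maxHeartbeats 1000000

open Matrix
open scoped ComplexOrder Kronecker

set_option linter.unusedSectionVars false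

open Matrix
open scoped ComplexOrder Kronecker

namespace CorrAux

variable {m n : Type*} [Fintype m] [Fintype n] [DecidableEq m] [DecidableEq n]

lemma trace_nonneg_of_psd {M : Matrix n n ℂ} (hM : M.PosSemidef) : 0 ≤ M.trace := by
  unfold Matrix.trace
  refine Finset.sum_nonneg fun i _ => ?_
  exact hM.diag_nonneg

lemma psd_eq_conjTranspose_mul_self {M : Matrix n n ℂ} (hM : M.PosSemidef) :
    ∃ B : Matrix n n ℂ, M = Bᴴ * B := by
  open scoped MatrixOrder Matrix.Norms.L2Operator in
  exact CStarAlgebra.nonneg_iff_eq_star_mul_self.mp hM.nonneg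

lemma trace_mul_nonneg {ρ M : Matrix n n ℂ} (hρ : ρ.PosSemidef) (hM : M.PosSemidef) :
    0 ≤ (ρ * M).trace := by
  obtain ⟨B, hB⟩ := psd_eq_conjTranspose_mul_self hM
  rw [hB, ← Matrix.mul_assoc, Matrix.trace_mul_cycle]
  exact trace_nonneg_of_psd (hρ.mul_mul_conjTranspose_same B)

lemma kron_conjTranspose (A : Matrix m m ℂ) (B : Matrix n n ℂ) :
    (A ⊗ₖ B)ᴴ = Aᴴ ⊗ₖ Bᴴ := by
  ext ⟨i, j⟩ ⟨k, l⟩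
  simp [Matrix.conjTranspose_apply, star_mul']

lemma psd_kron {A : Matrix m m ℂ} {B : Matrix n n ℂ}
    (hA : A.PosSemidef) (hB : B.PosSemidef) : (A ⊗ₖ B).PosSemidef := by
  obtain ⟨C, hC⟩ := psd_eq_conjTranspose_mul_self hA
  obtain ⟨D, hD⟩ := psd_eq_conjTranspose_mul_self hB
  rw [hC, hD, Matrix.mul_kronecker_mul, ← kron_conjTranspose]
  exact Matrix.posSemidef_conjTranspose_mul_self _

lemma trace_mul_im_zero {A B : Matrix n n ℂ} (hA : A.IsHermitian) (hB : B.IsHermitian) :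
    ((A * B).trace).im = 0 := by
  rw [← Complex.conj_eq_iff_im]
  calc (starRingEnd ℂ) ((A * B).trace) = ((A * B)ᴴ).trace := by
        rw [Matrix.trace_conjTranspose]; rfl
    _ = (A * B).trace := by
        rw [Matrix.conjTranspose_mul, hA.eq, hB.eq, Matrix.trace_mul_comm]

lemma trace_eq_sum_eig {d : ℕ} {X : Matrix (Fin d) (Fin d) ℂ} (hX : X.IsHermitian) :
    X.trace = ∑ i, (hX.eigenvalues i : ℂ) := by
  conv_lhs => rw [hX.spectral_theorem, Unitary.conjStarAlgAut_apply]
  rw [Matrix.trace_mul_cycle, (Matrix.mem_unitaryGroup_iff').mp (hX.eigenvectorUnitary).2,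
    one_mul, Matrix.trace_diagonal]
  rfl

lemma trace_sq_eq_sum_eig {d : ℕ} {X : Matrix (Fin d) (Fin d) ℂ} (hX : X.IsHermitian) :
    (X * X).trace = ∑ i, ((hX.eigenvalues i : ℂ)) ^ 2 := by
  set U := (hX.eigenvectorUnitary : Matrix (Fin d) (Fin d) ℂ) with hUdef
  have hU : star U * U = 1 := (Matrix.mem_unitaryGroup_iff').mp (hX.eigenvectorUnitary).2
  set D := Matrix.diagonal ((RCLike.ofReal : ℝ → ℂ) ∘ hX.eigenvalues) with hDdef
  have h : X = U * D * star U := hX.spectral_theorem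
  have : X * X = U * (D * D) * star U := by
    rw [h]
    calc U * D * star U * (U * D * star U) = U * D * (star U * U) * D * star U := by
          noncomm_ring
      _ = U * (D * D) * star U := by rw [hU]; noncomm_ring
  rw [this, Matrix.trace_mul_cycle, ← Matrix.mul_assoc, hU, one_mul, hDdef,
    Matrix.diagonal_mul_diagonal, Matrix.trace_diagonal]
  simp [pow_two]

lemma eig_sq_le {d : ℕ} (hd : 2 ≤ d) {X : Matrix (Fin d) (Fin d) ℂ} (hX : X.IsHermitian)
    (h0 : X.trace = 0) (h2 : (X * X).trace = (d : ℂ)) (i : Fin d) :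
    (hX.eigenvalues i) ^ 2 ≤ (d : ℝ) - 1 := by
  have hsum : ∑ j, hX.eigenvalues j = 0 := by
    have := (trace_eq_sum_eig hX).symm.trans h0
    exact_mod_cast (by exact_mod_cast this : ((∑ j, hX.eigenvalues j : ℝ) : ℂ) = 0)
  have hsq : ∑ j, (hX.eigenvalues j) ^ 2 = (d : ℝ) := by
    have := (trace_sq_eq_sum_eig hX).symm.trans h2
    exact_mod_cast (by exact_mod_cast this :
      ((∑ j, (hX.eigenvalues j) ^ 2 : ℝ) : ℂ) = ((d : ℝ) : ℂ))
  set f := hX.eigenvalues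
  have h1 : ∑ j ∈ Finset.univ.erase i, f j = -f i := by
    have := Finset.sum_erase_add Finset.univ f (Finset.mem_univ i)
    linarith [hsum ▸ this]
  have h2' : ∑ j ∈ Finset.univ.erase i, (f j) ^ 2 = (d : ℝ) - (f i) ^ 2 := by
    have := Finset.sum_erase_add Finset.univ (fun j => (f j) ^ 2) (Finset.mem_univ i)
    rw [hsq] at this
    linarith
  have hcs := sq_sum_le_card_mul_sum_sq (s := Finset.univ.erase i) (f := f)
  rw [h1, h2', Finset.card_erase_of_mem (Finset.mem_univ i), Finset.card_univ,
    Fintype.card_fin] at hcs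
  have hcast : ((d - 1 : ℕ) : ℝ) = (d : ℝ) - 1 := by
    rw [Nat.cast_sub (by omega)]; norm_num
  rw [hcast] at hcs
  have hd' : (2 : ℝ) ≤ (d : ℝ) := by exact_mod_cast hd
  nlinarith [sq_nonneg (f i)]

lemma sqrt_smul_one_add_psd {d : ℕ} (hd : 2 ≤ d) {X : Matrix (Fin d) (Fin d) ℂ}
    (hXh : X.IsHermitian) (hX0 : X.trace = 0) (hX2 : (X * X).trace = (d : ℂ)) :
    (((Real.sqrt ((d : ℝ) - 1) : ℝ) : ℂ) • 1 + X).PosSemidef := by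
  set c := Real.sqrt ((d : ℝ) - 1) with hc
  set U := (hXh.eigenvectorUnitary : Matrix (Fin d) (Fin d) ℂ) with hUdef
  have hU : U * star U = 1 := (Matrix.mem_unitaryGroup_iff).mp (hXh.eigenvectorUnitary).2
  have hrep : ((c : ℂ) • 1 + X) =
      U * Matrix.diagonal (fun i => ((c + hXh.eigenvalues i : ℝ) : ℂ)) * star U := by
    have hdiag : Matrix.diagonal (fun i => ((c + hXh.eigenvalues i : ℝ) : ℂ)) =
        (c : ℂ) • 1 + Matrix.diagonal ((RCLike.ofReal : ℝ → ℂ) ∘ hXh.eigenvalues) := by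
      ext j k
      rcases eq_or_ne j k with rfl | h
      · simp only [Matrix.diagonal_apply_eq, Matrix.add_apply, Matrix.smul_apply,
          Matrix.one_apply_eq, Function.comp_apply, smul_eq_mul, mul_one]
        push_cast
        rfl
      · simp [Matrix.diagonal_apply_ne _ h, Matrix.one_apply_ne h]
    rw [hdiag, Matrix.mul_add, Matrix.add_mul]
    have : U * ((c : ℂ) • 1) * star U = (c : ℂ) • 1 := by
      rw [Matrix.mul_smul, Matrix.mul_one, Matrix.smul_mul, hU]
    rw [this]; congr 1; exact hXh.spectral_theorem
  rw [hrep]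
  have hpsd : (Matrix.diagonal (fun i => ((c + hXh.eigenvalues i : ℝ) : ℂ))).PosSemidef := by
    apply Matrix.PosSemidef.diagonal
    intro i
    simp only [Pi.zero_apply]
    rw [Complex.zero_le_real]
    have h1 := eig_sq_le hd hXh hX0 hX2 i
    have h2 : c ^ 2 = (d : ℝ) - 1 := Real.sq_sqrt (by
      have : (2 : ℝ) ≤ (d : ℝ) := by exact_mod_cast hd
      linarith)
    nlinarith [Real.sqrt_nonneg ((d : ℝ) - 1)]
  simpa [Matrix.star_eq_conjTranspose] using hpsd.mul_mul_conjTranspose_same U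

end CorrAux

/-- For a bipartite density operator `ρ` and traceless Hermitian operators
`X`, `Y` with `Tr X² = d_A`, `Tr Y² = d_B`:
`|⟨X⊗Y⟩| ≥ √(d_B-1)|⟨X⊗𝟙⟩| + √(d_A-1)|⟨𝟙⊗Y⟩| - √(d_A-1)√(d_B-1)`. -/
theorem correlation_lower_bound (dA dB : ℕ) (hA : 2 ≤ dA) (hB : 2 ≤ dB)
    (ρ : Matrix (Fin dA × Fin dB) (Fin dA × Fin dB) ℂ)
    (hρ : ρ.PosSemidef) (hρtr : ρ.trace = 1)
    (X : Matrix (Fin dA) (Fin dA) ℂ) (Y : Matrix (Fin dB) (Fin dB) ℂ)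
    (hXh : X.IsHermitian) (hX0 : X.trace = 0) (hX2 : (X * X).trace = (dA : ℂ))
    (hYh : Y.IsHermitian) (hY0 : Y.trace = 0) (hY2 : (Y * Y).trace = (dB : ℂ)) :
    ‖(ρ * (X ⊗ₖ Y)).trace‖ ≥
      Real.sqrt ((dB : ℝ) - 1) * ‖(ρ * (X ⊗ₖ (1 : Matrix (Fin dB) (Fin dB) ℂ))).trace‖ +
      Real.sqrt ((dA : ℝ) - 1) * ‖(ρ * ((1 : Matrix (Fin dA) (Fin dA) ℂ) ⊗ₖ Y)).trace‖ -
      Real.sqrt ((dA : ℝ) - 1) * Real.sqrt ((dB : ℝ) - 1) := by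
  classical
  set α := Real.sqrt ((dA : ℝ) - 1) with hα
  set β := Real.sqrt ((dB : ℝ) - 1) with hβ
  set a := (ρ * (X ⊗ₖ (1 : Matrix (Fin dB) (Fin dB) ℂ))).trace with ha
  set b := (ρ * ((1 : Matrix (Fin dA) (Fin dA) ℂ) ⊗ₖ Y)).trace with hb
  set c := (ρ * (X ⊗ₖ Y)).trace with hc
  -- Hermitian facts
  have hermX1 : (X ⊗ₖ (1 : Matrix (Fin dB) (Fin dB) ℂ)).IsHermitian := by
    show _ᴴ = _
    rw [CorrAux.kron_conjTranspose, hXh.eq, Matrix.conjTranspose_one]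
  have herm1Y : ((1 : Matrix (Fin dA) (Fin dA) ℂ) ⊗ₖ Y).IsHermitian := by
    show _ᴴ = _
    rw [CorrAux.kron_conjTranspose, hYh.eq, Matrix.conjTranspose_one]
  have hermXY : (X ⊗ₖ Y).IsHermitian := by
    show _ᴴ = _
    rw [CorrAux.kron_conjTranspose, hXh.eq, hYh.eq]
  have haim : a.im = 0 := CorrAux.trace_mul_im_zero hρ.1 hermX1
  have hbim : b.im = 0 := CorrAux.trace_mul_im_zero hρ.1 herm1Y
  have hcim : c.im = 0 := CorrAux.trace_mul_im_zero hρ.1 hermXY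
  set A := a.re with hAre
  set B := b.re with hBre
  set C := c.re with hCre
  -- key inequality
  have key : ∀ s t : ℝ, s ^ 2 = 1 → t ^ 2 = 1 →
      0 ≤ α * β + α * t * B + s * β * A + s * t * C := by
    intro s t hs ht
    have hXh' : ((s : ℂ) • X).IsHermitian := by
      show _ᴴ = _
      rw [Matrix.conjTranspose_smul, hXh.eq, Complex.star_def, Complex.conj_ofReal]
    have hYh' : ((t : ℂ) • Y).IsHermitian := by
      show _ᴴ = _
      rw [Matrix.conjTranspose_smul, hYh.eq, Complex.star_def, Complex.conj_ofReal]
    have hX0' : ((s : ℂ) • X).trace = 0 := by rw [Matrix.trace_smul, hX0, smul_zero]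
    have hY0' : ((t : ℂ) • Y).trace = 0 := by rw [Matrix.trace_smul, hY0, smul_zero]
    have hsq : (s : ℂ) * (s : ℂ) = 1 := by
      have : ((s ^ 2 : ℝ) : ℂ) = 1 := by rw [hs]; norm_num
      push_cast at this; linear_combination this
    have htq : (t : ℂ) * (t : ℂ) = 1 := by
      have : ((t ^ 2 : ℝ) : ℂ) = 1 := by rw [ht]; norm_num
      push_cast at this; linear_combination this
    have hX2' : (((s : ℂ) • X) * ((s : ℂ) • X)).trace = (dA : ℂ) := by
      rw [Matrix.smul_mul, Matrix.mul_smul, smul_smul, hsq, one_smul, hX2]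
    have hY2' : (((t : ℂ) • Y) * ((t : ℂ) • Y)).trace = (dB : ℂ) := by
      rw [Matrix.smul_mul, Matrix.mul_smul, smul_smul, htq, one_smul, hY2]
    have hP : (((α : ℂ) • 1 + (s : ℂ) • X) ⊗ₖ ((β : ℂ) • 1 + (t : ℂ) • Y)).PosSemidef :=
      CorrAux.psd_kron (CorrAux.sqrt_smul_one_add_psd hA hXh' hX0' hX2')
        (CorrAux.sqrt_smul_one_add_psd hB hYh' hY0' hY2')
    have hnn := CorrAux.trace_mul_nonneg hρ hP
    have hexp : (((α : ℂ) • 1 + (s : ℂ) • X) ⊗ₖ ((β : ℂ) • 1 + (t : ℂ) • Y)) =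
        ((α : ℂ) * (β : ℂ)) • (1 : Matrix (Fin dA × Fin dB) (Fin dA × Fin dB) ℂ) +
        ((α : ℂ) * (t : ℂ)) • ((1 : Matrix (Fin dA) (Fin dA) ℂ) ⊗ₖ Y) +
        ((s : ℂ) * (β : ℂ)) • (X ⊗ₖ (1 : Matrix (Fin dB) (Fin dB) ℂ)) +
        ((s : ℂ) * (t : ℂ)) • (X ⊗ₖ Y) := by
      simp only [Matrix.add_kronecker, Matrix.kronecker_add, Matrix.smul_kronecker,
        Matrix.kronecker_smul, Matrix.one_kronecker_one, smul_smul]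
      module
    have htr : (ρ * (((α : ℂ) • 1 + (s : ℂ) • X) ⊗ₖ ((β : ℂ) • 1 + (t : ℂ) • Y))).trace =
        ((α : ℂ) * (β : ℂ)) + ((α : ℂ) * (t : ℂ)) * b + ((s : ℂ) * (β : ℂ)) * a +
        ((s : ℂ) * (t : ℂ)) * c := by
      rw [hexp]
      simp only [Matrix.mul_add, Matrix.mul_smul, Matrix.trace_add, Matrix.trace_smul,
        Matrix.mul_one, smul_eq_mul, hρtr, mul_one, ha, hb, hc]
    rw [htr] at hnn
    have := (Complex.le_def.mp hnn).1
    simpa [Complex.add_re, Complex.mul_re, Complex.ofReal_re, Complex.ofReal_im,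
      haim, hbim, hcim, ← hAre, ← hBre, ← hCre] using this
  -- rewrite norms
  have hnorm : ∀ z : ℂ, z.im = 0 → ‖z‖ = |z.re| := by
    intro z hz
    have : z = (z.re : ℂ) := Complex.ext rfl (by simp [hz])
    rw [this, Complex.norm_real, Real.norm_eq_abs, Complex.ofReal_re]
  rw [ge_iff_le, hnorm a haim, hnorm b hbim, hnorm c hcim]
  rcases le_or_gt 0 A with hA' | hA' <;> rcases le_or_gt 0 B with hB' | hB'
  · have h := key (-1) (-1) (by norm_num) (by norm_num)
    rw [abs_of_nonneg hA', abs_of_nonneg hB']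
    have h1 := le_abs_self C
    nlinarith
  · have h := key (-1) 1 (by norm_num) (by norm_num)
    rw [abs_of_nonneg hA', abs_of_neg hB']
    have h1 := neg_le_abs C
    nlinarith
  · have h := key 1 (-1) (by norm_num) (by norm_num)
    rw [abs_of_neg hA', abs_of_nonneg hB']
    have h1 := neg_le_abs C
    nlinarith
  · have h := key 1 1 (by norm_num) (by norm_num)
    rw [abs_of_neg hA', abs_of_neg hB']
    have h1 := le_abs_self C
    nlinarith
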